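/- Suppose Q(k) → ∞ and there is an infinite sequence (k_i) such that for all i and all k > k_i, either Q(k) ≥ k_i, or Q(k) < k_i and there are only finitely many l > k with Q^n(l) = k for some n ∈ ℕ. Then the add-and-carry map α is a homeomorphism of E; in particular the all-zero sequence ⟨0⟩ has exactly one α-preimage in E. -/

import Mathlib

/-- Tail sum `Σ_{k > i} e_k S_k` of a digit sequence. -/
noncomputable def tailSum (S e : ℕ → ℕ) (i : ℕ) : ℕ := ∑' k : ℕ, if i < k then e k * S k else 0

/-- Greedy representation of `n` in the cutting-time base `(S_i)`. -/
noncomputable def IsGreedyRep (S : ℕ → ℕ) (n : ℕ) (e : ℕ → ℕ) : Prop :=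
  (∀ i, e i ≤ 1) ∧ (∃ N, ∀ i, N ≤ i → e i = 0) ∧
  (n = ∑' i : ℕ, e i * S i) ∧
  (∀ i, (e i = 1 ↔ IsGreatest {j | S j ≤ n - tailSum S e i} i))

/-- The number-system space `E` associated to a kneading map `Q`. -/
def Eset (Q : ℕ → ℕ) : Set (ℕ → ℕ) :=
  {e | (∀ i, e i ≤ 1) ∧ ∀ i j, e i = 1 → Q (i + 1) ≤ j → j < i → e j = 0}

namespace AlphaAux

/-- prefix sum `Σ_{j<i} e_j S_j` -/
def pfx (S e : ℕ → ℕ) (i : ℕ) : ℕ := ∑ j ∈ Finset.range i, e j * S j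

/-- greedy representation word of `n` -/
noncomputable def gr (S : ℕ → ℕ) : ℕ → ℕ → ℕ
  | n =>
    if _h : n = 0 then fun _ => 0
    else
      let m := Nat.findGreatest (fun j => S j ≤ n) n
      Function.update (gr S (n - max (S m) 1)) m 1
  decreasing_by
    exact Nat.sub_lt (Nat.pos_of_ne_zero _h) (lt_of_lt_of_le one_pos (le_max_right _ _))

lemma pfx_stable {S e : ℕ → ℕ} {i i' : ℕ} (h : ∀ j, i ≤ j → e j = 0) (hii : i ≤ i') :
    pfx S e i' = pfx S e i := by
  unfold pfx
  rw [← Finset.sum_subset (Finset.range_subset_range.2 hii)]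
  intro x hx hx2
  simp only [Finset.mem_range] at hx hx2
  rw [h x (by omega), zero_mul]

lemma pfx_succ (S e : ℕ → ℕ) (i : ℕ) : pfx S e (i + 1) = pfx S e i + e i * S i :=
  Finset.sum_range_succ _ _

lemma pfx_congr {S e e' : ℕ → ℕ} {i : ℕ} (h : ∀ j, j < i → e j = e' j) :
    pfx S e i = pfx S e' i :=
  Finset.sum_congr rfl fun j hj => by rw [h j (Finset.mem_range.1 hj)]

section Basic

variable {S Q : ℕ → ℕ} (hS0 : S 0 = 1) (hmono : StrictMono S)

include hS0 hmono

lemma S_ge (j : ℕ) : j + 1 ≤ S j := by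
  induction j with
  | zero => omega
  | succ k ih =>
    have h2 : S k < S (k + 1) := hmono (Nat.lt_succ_self k)
    omega

lemma S_pos (j : ℕ) : 1 ≤ S j := le_trans (by omega) (S_ge hS0 hmono j)

/-- Main structural lemma for `gr`, by strong induction. -/
lemma gr_spec (hQlt : ∀ k, 1 ≤ k → Q k < k) (hrec : ∀ k, 1 ≤ k → S k = S (k - 1) + S (Q k)) :
    ∀ n, (∀ j, gr S n j ≤ 1) ∧ (∀ j, gr S n j ≠ 0 → S j ≤ n) ∧
      (∀ i, pfx S (gr S n) i < S i) ∧ (pfx S (gr S n) n = n) := by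
  intro n
  induction n using Nat.strong_induction_on with
  | _ n IH =>
    rcases Nat.eq_zero_or_pos n with rfl | hn
    · rw [gr]
      refine ⟨fun j => by simp, fun j hj => by simp at hj, fun i => ?_, by simp [pfx]⟩
      simpa [pfx] using Nat.lt_of_lt_of_le Nat.zero_lt_one (S_pos hS0 hmono i)
    · set m := Nat.findGreatest (fun j => S j ≤ n) n with hm
      have hSm : S m ≤ n := by
        have := Nat.findGreatest_spec (P := fun j => S j ≤ n) (m := 0) (Nat.zero_le n)
          (by show S 0 ≤ n; rw [hS0]; omega)
        simpa [← hm] using this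
      have hmax : ∀ j, S j ≤ n → j ≤ m := by
        intro j hj
        by_contra hc
        refine Nat.findGreatest_is_greatest (P := fun j => S j ≤ n) (n := n) (k := j)
          (by omega) (le_trans (by have := S_ge hS0 hmono j; omega) hj) hj
      have hnlt : n < S (m + 1) := by
        by_contra hc
        have := hmax (m + 1) (by omega)
        omega
      have hmx : max (S m) 1 = S m := max_eq_left (S_pos hS0 hmono m)
      set r := n - S m with hr
      have hrear : gr S n = Function.update (gr S r) m 1 := by
        rw [gr]
        simp only [dif_neg (by omega : ¬ n = 0)]
        rw [← hm, hmx, ← hr]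
      have hrlt : r < S (Q (m + 1)) := by
        have := hrec (m + 1) (by omega)
        simp only [Nat.add_sub_cancel] at this
        omega
      have hQm : Q (m + 1) ≤ m := by have := hQlt (m + 1) (by omega); omega
      have hrSm : r < S m := lt_of_lt_of_le hrlt (hmono.le_iff_le.2 hQm)
      obtain ⟨ihb, ihs, ihp, iht⟩ := IH r (by have := S_pos hS0 hmono m; omega)
      have hsupp : ∀ j, gr S r j ≠ 0 → j < m := by
        intro j hj
        by_contra hc
        have h1 : S m ≤ S j := hmono.le_iff_le.2 (by omega)
        have h2 := ihs j hj
        omega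
      have hgrm : gr S r m = 0 := by
        by_contra hc
        exact absurd (hsupp m hc) (lt_irrefl m)
      have hstab : ∀ i, m ≤ i → pfx S (gr S r) i = r := by
        intro i hi
        have e1 : pfx S (gr S r) (i + r) = pfx S (gr S r) i :=
          pfx_stable (fun j hj => by
            by_contra hc
            have := hsupp j hc; omega) (by omega)
        have e2 : pfx S (gr S r) (i + r) = pfx S (gr S r) r :=
          pfx_stable (fun j hj => by
            by_contra hc
            have h3 := ihs j hc
            have h4 := S_ge hS0 hmono j
            omega) (by omega)
        rw [← e1, e2, iht]
      have hbig : ∀ i, m < i → pfx S (gr S n) i = n := by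
        intro i hi
        have h1 : pfx S (gr S n) i = 1 * S m + ∑ j ∈ Finset.range i \ {m}, gr S r j * S j := by
          unfold pfx
          have hfun : (fun j => Function.update (gr S r) m 1 j * S j) =
              Function.update (fun j => gr S r j * S j) m (1 * S m) := by
            funext j
            rcases eq_or_ne j m with rfl | hne
            · simp
            · simp [Function.update_of_ne hne]
          rw [hrear]
          calc ∑ j ∈ Finset.range i, Function.update (gr S r) m 1 j * S j
              = ∑ j ∈ Finset.range i, Function.update (fun j => gr S r j * S j) m (1 * S m) j := by
                rw [hfun]
            _ = 1 * S m + ∑ j ∈ Finset.range i \ {m}, gr S r j * S j :=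
                Finset.sum_update_of_mem (Finset.mem_range.2 hi) _ _
        have h2 : ∑ j ∈ Finset.range i \ {m}, gr S r j * S j = pfx S (gr S r) i := by
          unfold pfx
          rw [Finset.sum_subset Finset.sdiff_subset]
          intro x hx hx2
          have hxm : x = m := by
            simp only [Finset.mem_sdiff, Finset.mem_singleton, Finset.mem_range] at hx hx2
            by_contra hc
            exact hx2 ⟨hx, hc⟩
          rw [hxm, hgrm, zero_mul]
        rw [h1, h2, hstab i (le_of_lt hi)]
        omega
      have hmn : m < n := by have := S_ge hS0 hmono m; omega
      refine ⟨?_, ?_, ?_, ?_⟩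
      · intro j
        rw [hrear, Function.update_apply]
        split
        · omega
        · exact ihb j
      · intro j hj
        rw [hrear, Function.update_apply] at hj
        by_cases hc : j = m
        · subst hc; rw [if_pos rfl] at hj; exact hSm
        · rw [if_neg hc] at hj
          exact le_trans (ihs j hj) (by omega)
      · intro i
        rcases le_or_gt i m with hi | hi
        · have heq : pfx S (gr S n) i = pfx S (gr S r) i := by
            refine pfx_congr fun j hj => ?_
            rw [hrear, Function.update_of_ne (by omega)]
          rw [heq]; exact ihp i
        · rw [hbig i hi]
          exact lt_of_lt_of_le hnlt (hmono.le_iff_le.2 hi)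
      · exact hbig n hmn

lemma gr_supp (hQlt : ∀ k, 1 ≤ k → Q k < k) (hrec : ∀ k, 1 ≤ k → S k = S (k - 1) + S (Q k))
    (n : ℕ) : ∀ j, n ≤ j → gr S n j = 0 := by
  intro j hj
  by_contra hc
  have h1 := (gr_spec hS0 hmono hQlt hrec n).2.1 j hc
  have h2 := S_ge hS0 hmono j
  omega

lemma gr_total_from (hQlt : ∀ k, 1 ≤ k → Q k < k) (hrec : ∀ k, 1 ≤ k → S k = S (k - 1) + S (Q k))
    (n : ℕ) {i : ℕ} (hi : ∀ j, i ≤ j → gr S n j = 0) : pfx S (gr S n) i = n := by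
  have e1 : pfx S (gr S n) (i + n) = pfx S (gr S n) i := pfx_stable hi (by omega)
  have e2 : pfx S (gr S n) (i + n) = pfx S (gr S n) n :=
    pfx_stable (gr_supp hS0 hmono hQlt hrec n) (by omega)
  rw [← e1, e2, (gr_spec hS0 hmono hQlt hrec n).2.2.2]

lemma gr_pfx_le (hQlt : ∀ k, 1 ≤ k → Q k < k) (hrec : ∀ k, 1 ≤ k → S k = S (k - 1) + S (Q k))
    (n i : ℕ) : pfx S (gr S n) i ≤ n := by
  have e1 : pfx S (gr S n) (i + n) = pfx S (gr S n) n :=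
    pfx_stable (gr_supp hS0 hmono hQlt hrec n) (by omega)
  have e2 : pfx S (gr S n) i ≤ pfx S (gr S n) (i + n) := by
    unfold pfx
    exact Finset.sum_le_sum_of_subset (Finset.range_subset_range.2 (by omega))
  rw [e1, (gr_spec hS0 hmono hQlt hrec n).2.2.2] at e2
  exact e2


/-- A bounded word with finite support and the prefix condition is the greedy rep of its sum. -/
lemma isGreedy_of_good {e : ℕ → ℕ} {N : ℕ} (hb : ∀ j, e j ≤ 1) (hsupp : ∀ j, N ≤ j → e j = 0)
    (hpfx : ∀ i, pfx S e i < S i) : IsGreedyRep S (pfx S e N) e := by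
  set n := pfx S e N with hn
  have hterm : ∀ b ∉ Finset.range N, e b * S b = 0 := by
    intro b hb2
    rw [hsupp b (by simpa using hb2), zero_mul]
  have htsum : ∑' i : ℕ, e i * S i = n := by
    rw [tsum_eq_sum hterm]; rfl
  have hpfxmono : ∀ i, pfx S e (min (i + 1) N) = pfx S e (i + 1) := by
    intro i
    rcases le_or_gt (i + 1) N with h | h
    · rw [min_eq_left h]
    · rw [min_eq_right (by omega)]
      exact (pfx_stable hsupp (by omega)).symm
  have htail : ∀ i, n - tailSum S e i = pfx S e (i + 1) := by
    intro i
    have h1 : tailSum S e i = ∑ k ∈ Finset.range N, if i < k then e k * S k else 0 := by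
      unfold tailSum
      refine tsum_eq_sum fun b hb2 => ?_
      rw [hterm b hb2]
      simp
    have h3 : ∑ k ∈ Finset.range N, (if i < k then 0 else e k * S k) =
        pfx S e (min (i + 1) N) := by
      have e1 : ∀ k, (if i < k then 0 else e k * S k) = (if ¬ i < k then e k * S k else 0) := by
        intro k; by_cases h : i < k <;> simp [h]
      rw [Finset.sum_congr rfl fun k _ => e1 k, ← Finset.sum_filter]
      have e2 : (Finset.range N).filter (fun k => ¬ i < k) = Finset.range (min (i + 1) N) := by
        ext k
        simp only [Finset.mem_filter, Finset.mem_range, not_lt, lt_min_iff]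
        omega
      rw [e2]
      rfl
    have h2 : n = (∑ k ∈ Finset.range N, if i < k then e k * S k else 0) + pfx S e (i + 1) := by
      rw [← hpfxmono i, ← h3, hn]
      unfold pfx
      rw [← Finset.sum_add_distrib]
      refine Finset.sum_congr rfl fun j _ => by split <;> simp
    rw [h1]
    omega
  refine ⟨hb, ⟨N, hsupp⟩, htsum.symm, fun i => ?_⟩
  rw [htail i]
  constructor
  · intro he
    constructor
    · show S i ≤ pfx S e (i + 1)
      rw [pfx_succ, he, one_mul]
      omega
    · intro j hj
      have : S j < S (i + 1) := lt_of_le_of_lt hj (hpfx (i + 1))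
      have := hmono.lt_iff_lt.1 this
      omega
  · intro hg
    by_contra hne
    have he0 : e i = 0 := by have := hb i; omega
    have : pfx S e (i + 1) = pfx S e i := by rw [pfx_succ, he0]; ring
    have h4 : S i ≤ pfx S e i := by rw [← this]; exact hg.1
    exact absurd h4 (not_le.2 (hpfx i))

end Basic

/-- The positive part of the backward `Q`-orbit of `m`. -/
def chain (Q : ℕ → ℕ) : ℕ → Finset ℕ
  | m => if _h : m = 0 then ∅ else insert m (chain Q (min (Q m) (m - 1)))
  decreasing_by omega

section Chain

variable {S Q : ℕ → ℕ}

lemma chain_zero : chain Q 0 = ∅ := by rw [chain]; rfl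

lemma chain_eq (hQlt : ∀ k, 1 ≤ k → Q k < k) {m : ℕ} (hm : 1 ≤ m) :
    chain Q m = insert m (chain Q (Q m)) := by
  rw [chain]
  have h := hQlt m hm
  rw [dif_neg (by omega : ¬ m = 0), min_eq_left (by omega)]

lemma mem_chain_bounds (hQlt : ∀ k, 1 ≤ k → Q k < k) :
    ∀ m r, r ∈ chain Q m → 1 ≤ r ∧ r ≤ m := by
  intro m
  induction m using Nat.strong_induction_on with
  | _ m IH =>
    intro r hr
    rcases Nat.eq_zero_or_pos m with rfl | hm
    · rw [chain_zero] at hr; simp at hr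
    · rw [chain_eq hQlt hm] at hr
      rcases Finset.mem_insert.1 hr with rfl | hr2
      · omega
      · have := IH (Q m) (hQlt m hm) r hr2
        have := hQlt m hm
        omega

lemma self_mem_chain (hQlt : ∀ k, 1 ≤ k → Q k < k) {m : ℕ} (hm : 1 ≤ m) : m ∈ chain Q m := by
  rw [chain_eq hQlt hm]; exact Finset.mem_insert_self _ _

lemma chain_trunc (hQlt : ∀ k, 1 ≤ k → Q k < k) :
    ∀ m K r, K ∈ chain Q m → r ≤ K → (r ∈ chain Q m ↔ r ∈ chain Q K) := by
  intro m
  induction m using Nat.strong_induction_on with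
  | _ m IH =>
    intro K r hK hrK
    rcases Nat.eq_zero_or_pos m with rfl | hm
    · rw [chain_zero] at hK; simp at hK
    · rcases eq_or_ne K m with rfl | hne
      · rfl
      · rw [chain_eq hQlt hm] at hK ⊢
        have hK2 : K ∈ chain Q (Q m) := by
          rcases Finset.mem_insert.1 hK with h | h
          · exact absurd h hne
          · exact h
        have hKb := mem_chain_bounds hQlt (Q m) K hK2
        rw [Finset.mem_insert]
        constructor
        · rintro (h | h)
          · exfalso; have := hQlt m hm; omega
          · exact (IH (Q m) (hQlt m hm) K r hK2 hrK).1 h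
        · intro h
          exact Or.inr ((IH (Q m) (hQlt m hm) K r hK2 hrK).2 h)

variable (hS0 : S 0 = 1) (hmono : StrictMono S)
include hS0 hmono

lemma findGreatest_S_eq {n m' : ℕ} (hn : 1 ≤ n) (h1 : S m' ≤ n) (h2 : n < S (m' + 1)) :
    Nat.findGreatest (fun j => S j ≤ n) n = m' := by
  have hge := S_ge hS0 hmono m'
  have hmn : m' ≤ n := by omega
  refine le_antisymm ?_ (Nat.le_findGreatest hmn h1)
  by_contra hc
  have hspec : S (Nat.findGreatest (fun j => S j ≤ n) n) ≤ n :=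
    Nat.findGreatest_spec (P := fun j => S j ≤ n) (m := m') hmn h1
  have : S (m' + 1) ≤ S (Nat.findGreatest (fun j => S j ≤ n) n) :=
    hmono.le_iff_le.2 (by omega)
  omega

lemma gr_S_eq (m : ℕ) : ∀ j, gr S (S m) j = if j = m then 1 else 0 := by
  intro j
  have hp := S_pos hS0 hmono m
  have hnlt : S m < S (m + 1) := hmono (by omega)
  rw [gr]
  rw [dif_neg (by omega : ¬ S m = 0)]
  rw [findGreatest_S_eq hS0 hmono (by omega) (le_refl _) hnlt,
    max_eq_left (S_pos hS0 hmono m), Nat.sub_self]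
  rw [Function.update_apply]
  split
  · rfl
  · rw [gr]; simp

lemma gr_Sm1 (hQlt : ∀ k, 1 ≤ k → Q k < k) (hrec : ∀ k, 1 ≤ k → S k = S (k - 1) + S (Q k)) :
    ∀ m j, gr S (S m - 1) j = if j + 1 ∈ chain Q m then 1 else 0 := by
  intro m
  induction m using Nat.strong_induction_on with
  | _ m IH =>
    intro j
    rcases Nat.eq_zero_or_pos m with rfl | hm
    · rw [hS0]
      simp only [Nat.sub_self, chain_zero, Finset.notMem_empty, if_false]
      rw [gr]; simp
    · have hge := S_ge hS0 hmono m
      have hQm := hQlt m hm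
      have hr := hrec m hm
      have hS1 : S (m - 1) ≤ S m - 1 := by
        have : S (m - 1) < S m := hmono (by omega)
        omega
      have hS2 : S m - 1 < S (m - 1 + 1) := by
        have : m - 1 + 1 = m := by omega
        rw [this]
        omega
      rw [gr]
      rw [dif_neg (by omega : ¬ S m - 1 = 0)]
      rw [findGreatest_S_eq hS0 hmono (by omega) hS1 hS2,
        max_eq_left (S_pos hS0 hmono (m - 1))]
      have hrem : S m - 1 - S (m - 1) = S (Q m) - 1 := by
        have := S_pos hS0 hmono (Q m)
        omega
      rw [hrem, Function.update_apply]
      by_cases hj : j = m - 1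
      · subst hj
        rw [if_pos rfl, if_pos (by
          have h1 : m - 1 + 1 = m := by omega
          rw [h1, chain_eq hQlt hm]
          exact Finset.mem_insert_self _ _)]
      · rw [if_neg hj, IH (Q m) hQm j]
        have hiff : (j + 1 ∈ chain Q m) ↔ (j + 1 ∈ chain Q (Q m)) := by
          rw [chain_eq hQlt hm, Finset.mem_insert]
          constructor
          · rintro (h | h)
            · exfalso; omega
            · exact h
          · exact Or.inr
        by_cases hmem : j + 1 ∈ chain Q (Q m)
        · rw [if_pos hmem, if_pos (hiff.2 hmem)]
        · rw [if_neg hmem, if_neg (fun h => hmem (hiff.1 h))]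

end Chain

section Crossing

variable {Q : ℕ → ℕ}

lemma chain_aux (hQlt : ∀ k, 1 ≤ k → Q k < k) (K : ℕ) (hK : 1 ≤ K) :
    ∀ m, K < m → K ∈ chain Q m ∨
      ∃ a, K < a ∧ Q a < K ∧ a ≤ m ∧ ∃ n : ℕ, Q^[n] m = a := by
  intro m
  induction m using Nat.strong_induction_on with
  | _ m IH =>
    intro hm
    have hm1 : 1 ≤ m := by omega
    rcases lt_trichotomy (Q m) K with h | h | h
    · exact Or.inr ⟨m, hm, h, le_refl m, 0, rfl⟩
    · left
      rw [chain_eq hQlt hm1]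
      refine Finset.mem_insert_of_mem ?_
      rw [h]
      exact self_mem_chain hQlt hK
    · rcases IH (Q m) (hQlt m hm1) h with hc | ⟨a, h1, h2, h3, n, h4⟩
      · left
        rw [chain_eq hQlt hm1]
        exact Finset.mem_insert_of_mem hc
      · refine Or.inr ⟨a, h1, h2, le_trans h3 (le_of_lt (hQlt m hm1)), n + 1, ?_⟩
        rw [Function.iterate_succ_apply]
        exact h4

lemma crossing (hQlt : ∀ k, 1 ≤ k → Q k < k)
    (hQinf : Filter.Tendsto Q Filter.atTop Filter.atTop) (K : ℕ) (hK : 1 ≤ K)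
    (hfin : ∀ a, K < a → Q a < K → {l | a < l ∧ ∃ n : ℕ, Q^[n] l = a}.Finite) :
    ∃ M, ∀ m, M ≤ m → K ∈ chain Q m := by
  obtain ⟨A, hA⟩ : ∃ A, ∀ a, A ≤ a → K ≤ Q a := by
    have := (hQinf.eventually_ge_atTop K).exists_forall_of_atTop
    simpa using this
  set Bad : Set ℕ := ⋃ a ∈ {a | K < a ∧ a < A ∧ Q a < K}, {l | a < l ∧ ∃ n : ℕ, Q^[n] l = a}
    with hBad
  have hBadFin : Bad.Finite := by
    refine Set.Finite.biUnion ?_ fun a ha => hfin a ha.1 ha.2.2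
    exact (Set.finite_Ioo K A).subset fun a ha => ⟨ha.1, ha.2.1⟩
  obtain ⟨B, hB⟩ : ∃ B, ∀ l ∈ Bad, l ≤ B := by
    rcases hBadFin.bddAbove with ⟨B, hB⟩
    exact ⟨B, fun l hl => hB hl⟩
  refine ⟨A + B + K + 1, fun m hm => ?_⟩
  rcases chain_aux hQlt K hK m (by omega) with h | ⟨a, h1, h2, h3, n, h4⟩
  · exact h
  · exfalso
    have haA : a < A := by
      by_contra hc
      have := hA a (by omega)
      omega
    have ham : a < m := by omega
    have hmBad : m ∈ Bad := by
      rw [hBad]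
      refine Set.mem_biUnion (show a ∈ {a | K < a ∧ a < A ∧ Q a < K} from ⟨h1, haA, h2⟩) ?_
      exact ⟨ham, n, h4⟩
    have := hB m hmBad
    omega

end Crossing

section Carry

variable {S Q : ℕ → ℕ} (hS0 : S 0 = 1) (hmono : StrictMono S)

/-- Uniqueness: two bounded words with the prefix condition and equal sums agree. -/
lemma good_unique {e e' : ℕ → ℕ} {N : ℕ} (hb : ∀ j, e j ≤ 1) (hb' : ∀ j, e' j ≤ 1)
    (hsupp : ∀ j, N ≤ j → e j = 0) (hsupp' : ∀ j, N ≤ j → e' j = 0)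
    (hpfx : ∀ i, pfx S e i < S i) (hpfx' : ∀ i, pfx S e' i < S i)
    (hsum : pfx S e N = pfx S e' N) : e = e' := by
  by_contra hne
  have hex : ∃ j, j < N ∧ e j ≠ e' j := by
    rcases Function.ne_iff.1 hne with ⟨j, hj⟩
    refine ⟨j, ?_, hj⟩
    by_contra hc
    rw [hsupp j (by omega), hsupp' j (by omega)] at hj
    exact hj rfl
  classical
  set Dif := (Finset.range N).filter (fun j => e j ≠ e' j) with hDif
  have hDne : Dif.Nonempty := by
    rcases hex with ⟨j, hj1, hj2⟩
    exact ⟨j, Finset.mem_filter.2 ⟨Finset.mem_range.2 hj1, hj2⟩⟩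
  set i := Dif.max' hDne with hi
  have hiDif : i ∈ Dif := Finset.max'_mem _ _
  have hiN : i < N := Finset.mem_range.1 (Finset.mem_filter.1 hiDif).1
  have hineq : e i ≠ e' i := (Finset.mem_filter.1 hiDif).2
  have htails : ∀ j, i < j → e j = e' j := by
    intro j hj
    by_contra hc
    rcases lt_or_ge j N with h | h
    · have : j ∈ Dif := Finset.mem_filter.2 ⟨Finset.mem_range.2 h, hc⟩
      have := Finset.le_max' Dif j this
      omega
    · rw [hsupp j h, hsupp' j h] at hc
      exact hc rfl
  have hsplit : ∀ f : ℕ → ℕ, ∑ j ∈ Finset.range N, f j =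
      ∑ j ∈ Finset.range (i + 1), f j + ∑ j ∈ Finset.Ico (i + 1) N, f j := by
    intro f
    rw [Finset.range_eq_Ico, Finset.range_eq_Ico]
    exact (Finset.sum_Ico_consecutive f (Nat.zero_le (i + 1)) (by omega : i + 1 ≤ N)).symm
  have hteq : ∑ j ∈ Finset.Ico (i + 1) N, e j * S j = ∑ j ∈ Finset.Ico (i + 1) N, e' j * S j :=
    Finset.sum_congr rfl fun j hj => by
      rw [htails j (Finset.mem_Ico.1 hj).1]
  have hpeq : pfx S e (i + 1) = pfx S e' (i + 1) := by
    have h1 := hsplit (fun j => e j * S j)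
    have h2 := hsplit (fun j => e' j * S j)
    have : pfx S e N = pfx S e (i + 1) + ∑ j ∈ Finset.Ico (i + 1) N, e j * S j := h1
    have h4 : pfx S e' N = pfx S e' (i + 1) + ∑ j ∈ Finset.Ico (i + 1) N, e' j * S j := h2
    omega
  rcases Nat.lt_or_ge (e i) (e' i) with h | h
  · have he : e i = 0 := by have := hb' i; omega
    have he' : e' i = 1 := by have := hb' i; omega
    rw [pfx_succ, pfx_succ, he, he'] at hpeq
    have := hpfx i
    omega
  · have he' : e' i = 0 := by have := hb i; have := hb' i; omega
    have he : e i = 1 := by have := hb i; omega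
    rw [pfx_succ, pfx_succ, he, he'] at hpeq
    have := hpfx' i
    omega

include hS0 hmono

/-- At a maximal full prefix the digit is 0. -/
lemma digit0 (hQlt : ∀ k, 1 ≤ k → Q k < k) (hrec : ∀ k, 1 ≤ k → S k = S (k - 1) + S (Q k))
    {v : ℕ → ℕ} {l : ℕ} (hb : v l ≤ 1) (hpfx : ∀ i, pfx S v i < S i)
    (hfull : pfx S v l = S l - 1) (hnot : pfx S v (l + 1) ≠ S (l + 1) - 1) : v l = 0 := by
  by_contra hc
  have hv : v l = 1 := by omega
  have hps : pfx S v (l + 1) = 2 * S l - 1 := by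
    rw [pfx_succ, hfull, hv]
    have := S_pos hS0 hmono l
    omega
  have hr := hrec (l + 1) (by omega)
  simp only [Nat.add_sub_cancel] at hr
  have hQ := hQlt (l + 1) (by omega)
  rcases eq_or_ne (Q (l + 1)) l with h | h
  · rw [h] at hr
    have := S_pos hS0 hmono l
    omega
  · have hQl : Q (l + 1) < l := by omega
    have h1 : S (Q (l + 1)) ≤ S (l - 1) := hmono.le_iff_le.2 (by omega)
    have h2 : S (l - 1) < S l := hmono (by omega)
    have h3 := hpfx (l + 1)
    have := S_pos hS0 hmono l
    omega

/-- The add-and-carry action on greedy words. -/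
lemma carry (hQlt : ∀ k, 1 ≤ k → Q k < k) (hrec : ∀ k, 1 ≤ k → S k = S (k - 1) + S (Q k))
    (n l : ℕ) (hfull : pfx S (gr S n) l = S l - 1)
    (hmax : ∀ i, l < i → pfx S (gr S n) i ≠ S i - 1) :
    ∀ j, gr S (n + 1) j = if j < l then 0 else if j = l then 1 else gr S n j := by
  obtain ⟨hb, hs, hp, ht⟩ := gr_spec hS0 hmono hQlt hrec n
  obtain ⟨hb2, hs2, hp2, ht2⟩ := gr_spec hS0 hmono hQlt hrec (n + 1)
  have hel : gr S n l = 0 :=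
    digit0 hS0 hmono hQlt hrec (hb l) hp hfull (hmax (l + 1) (by omega))
  set w : ℕ → ℕ := fun j => if j < l then 0 else if j = l then 1 else gr S n j with hw
  set N := n + l + 2 with hN
  have hsupgr : ∀ j, n ≤ j → gr S n j = 0 := gr_supp hS0 hmono hQlt hrec n
  have hsupgr2 : ∀ j, n + 1 ≤ j → gr S (n + 1) j = 0 := gr_supp hS0 hmono hQlt hrec (n + 1)
  have hwb : ∀ j, w j ≤ 1 := by
    intro j
    rw [hw]
    simp only []
    split
    · omega
    · split
      · omega
      · exact hb j
  have hwsupp : ∀ j, N ≤ j → w j = 0 := by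
    intro j hj
    rw [hw]
    simp only []
    rw [if_neg (by omega), if_neg (by omega)]
    exact hsupgr j (by omega)
  have hwl : pfx S w (l + 1) = S l := by
    rw [pfx_succ]
    have h0 : pfx S w l = 0 := by
      unfold pfx
      refine Finset.sum_eq_zero fun j hj => ?_
      rw [hw]
      simp only [Finset.mem_range] at hj
      simp only []
      rw [if_pos hj, zero_mul]
    rw [h0, hw]
    simp
  have hel1 : pfx S (gr S n) (l + 1) = S l - 1 := by
    rw [pfx_succ, hel, hfull]; ring
  have hkey : ∀ i, l < i → pfx S w i = pfx S (gr S n) i + 1 := by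
    intro i hi
    have hsplit : ∀ f : ℕ → ℕ, ∑ j ∈ Finset.range i, f j =
        ∑ j ∈ Finset.range (l + 1), f j + ∑ j ∈ Finset.Ico (l + 1) i, f j := by
      intro f
      rw [Finset.range_eq_Ico, Finset.range_eq_Ico]
      exact (Finset.sum_Ico_consecutive f (Nat.zero_le (l + 1)) (by omega : l + 1 ≤ i)).symm
    have h1 : pfx S w i = pfx S w (l + 1) + ∑ j ∈ Finset.Ico (l + 1) i, w j * S j :=
      hsplit _
    have h2 : pfx S (gr S n) i =
        pfx S (gr S n) (l + 1) + ∑ j ∈ Finset.Ico (l + 1) i, gr S n j * S j := hsplit _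
    have h3 : ∑ j ∈ Finset.Ico (l + 1) i, w j * S j =
        ∑ j ∈ Finset.Ico (l + 1) i, gr S n j * S j := by
      refine Finset.sum_congr rfl fun j hj => ?_
      have := (Finset.mem_Ico.1 hj).1
      rw [hw]
      simp only []
      rw [if_neg (by omega), if_neg (by omega)]
    rw [h1, h3, hwl, h2, hel1]
    have := S_pos hS0 hmono l
    omega
  have hwpfx : ∀ i, pfx S w i < S i := by
    intro i
    rcases le_or_gt i l with hi | hi
    · have h0 : pfx S w i = 0 := by
        unfold pfx
        refine Finset.sum_eq_zero fun j hj => ?_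
        simp only [Finset.mem_range] at hj
        rw [hw]
        simp only []
        rw [if_pos (by omega), zero_mul]
      rw [h0]
      exact S_pos hS0 hmono i
    · rw [hkey i hi]
      have h1 := hp i
      have h2 := hmax i hi
      omega
  have hwsum : pfx S w N = n + 1 := by
    rw [hkey N (by omega), pfx_stable hsupgr (by omega), ht]
  have := good_unique (S := S) hb2 hwb (fun j hj => hsupgr2 j (by omega)) hwsupp hp2 hwpfx
    (by rw [pfx_stable hsupgr2 (by omega), ht2, hwsum])
  intro j
  rw [this]

/-- Digits below a full prefix are uniquely determined. -/
lemma fulldet (hQlt : ∀ k, 1 ≤ k → Q k < k) (hrec : ∀ k, 1 ≤ k → S k = S (k - 1) + S (Q k))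
    {v : ℕ → ℕ} {L : ℕ} (hbv : ∀ j, v j ≤ 1) (hpv : ∀ i, pfx S v i < S i)
    (hfull : pfx S v L = S L - 1) : ∀ j, j < L → v j = gr S (S L - 1) j := by
  obtain ⟨hb, hs, hp, ht⟩ := gr_spec hS0 hmono hQlt hrec (S L - 1)
  set u : ℕ → ℕ := fun j => if j < L then v j else 0 with hu
  have hub : ∀ j, u j ≤ 1 := by
    intro j
    rw [hu]
    simp only []
    split
    · exact hbv j
    · omega
  have husupp : ∀ j, L ≤ j → u j = 0 := by
    intro j hj
    rw [hu]
    simp only []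
    rw [if_neg (by omega)]
  have hupfx_le : ∀ i, i ≤ L → pfx S u i = pfx S v i := by
    intro i hi
    refine pfx_congr fun j hj => ?_
    rw [hu]
    simp only []
    rw [if_pos (by omega)]
  have hupfx : ∀ i, pfx S u i < S i := by
    intro i
    rcases le_or_gt i L with hi | hi
    · rw [hupfx_le i hi]; exact hpv i
    · rw [pfx_stable husupp (by omega), hupfx_le L (le_refl L), hfull]
      have h1 : S L ≤ S i := hmono.le_iff_le.2 (by omega)
      have := S_pos hS0 hmono L
      omega
  have hgrsupp : ∀ j, S L - 1 ≤ j → gr S (S L - 1) j = 0 := gr_supp hS0 hmono hQlt hrec _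
  have husum : pfx S u (L + S L) = S L - 1 := by
    rw [pfx_stable (i' := L + S L) husupp (by omega), hupfx_le L (le_refl L), hfull]
  have heq : u = gr S (S L - 1) := by
    refine good_unique (S := S) (N := L + S L) hub hb (fun j hj => husupp j (by omega))
      (fun j hj => hgrsupp j (by omega)) hupfx hp ?_
    rw [husum, pfx_stable (i' := L + S L) hgrsupp (by omega), ht]
  intro j hj
  rw [← heq, hu]
  simp only []
  rw [if_pos hj]

end Carry

lemma cylinder_open (c : ℕ → ℕ) (F : Finset ℕ) :
    IsOpen (⋂ j ∈ F, {e : ℕ → ℕ | e j = c j}) := by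
  refine isOpen_biInter_finset fun j _ => ?_
  have h : {e : ℕ → ℕ | e j = c j} = (fun e : ℕ → ℕ => e j) ⁻¹' {c j} := rfl
  rw [h]
  exact (continuous_apply j).isOpen_preimage _ (isOpen_discrete _)

end AlphaAux

open AlphaAux Filter

/-- If `Q(k) → ∞` and there is an infinite (strictly increasing) sequence `(k_i)` such that
for all `i` and all `k > k_i` either `Q(k) ≥ k_i`, or `Q(k) < k_i` and only finitely many
`l > k` satisfy `Q^n(l) = k` for some `n`, then the add-and-carry map `α` is a
homeomorphism of `E`; in particular the zero sequence has exactly one `α`-preimage in `E`. -/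
theorem alpha_homeomorphism (S Q : ℕ → ℕ) (hS0 : S 0 = 1) (hmono : StrictMono S)
    (hQlt : ∀ k, 1 ≤ k → Q k < k) (hrec : ∀ k, 1 ≤ k → S k = S (k - 1) + S (Q k))
    (hQinf : Filter.Tendsto Q Filter.atTop Filter.atTop)
    (ks : ℕ → ℕ) (hks : StrictMono ks)
    (hcond : ∀ i k, ks i < k →
      (ks i ≤ Q k ∨ (Q k < ks i ∧ {l | k < l ∧ ∃ n : ℕ, Q^[n] l = k}.Finite)))
    (α : (ℕ → ℕ) → (ℕ → ℕ))
    (hmaps : Set.MapsTo α (Eset Q) (Eset Q))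
    (hcont : ContinuousOn α (Eset Q))
    (hagree : ∀ (n : ℕ) (e e' : ℕ → ℕ),
      IsGreedyRep S n e → IsGreedyRep S (n + 1) e' → α e = e')
    (hclos : Eset Q = closure {e | ∃ n : ℕ, IsGreedyRep S n e}) :
    (∃ h : ↥(Eset Q) ≃ₜ ↥(Eset Q), ∀ e : ↥(Eset Q), (h e : ℕ → ℕ) = α (e : ℕ → ℕ)) ∧
    (∃! e : ℕ → ℕ, e ∈ Eset Q ∧ α e = fun _ => 0) := by
  classical
  have hb := fun n => (gr_spec hS0 hmono hQlt hrec n).1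
  have hsp := fun n => (gr_spec hS0 hmono hQlt hrec n).2.1
  have hp := fun n => (gr_spec hS0 hmono hQlt hrec n).2.2.1
  have ht := fun n => (gr_spec hS0 hmono hQlt hrec n).2.2.2
  have hsupp := gr_supp hS0 hmono hQlt hrec
  -- greedy representations exist
  have hgr : ∀ n, IsGreedyRep S n (gr S n) := by
    intro n
    have h1 := isGreedy_of_good hS0 hmono (hb n) (hsupp n) (hp n)
    rwa [ht n] at h1
  -- uniqueness of greedy representations
  have huniq : ∀ n e, IsGreedyRep S n e → e = gr S n := by
    intro n e he
    match n with
    | 0 =>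
      obtain ⟨hbe, ⟨N, hNe⟩, hsum, _⟩ := he
      funext j
      rw [hsupp 0 j (Nat.zero_le j)]
      by_contra hc
      rcases Nat.lt_or_ge j N with hj | hj
      · have h1 : 0 < ∑' i : ℕ, e i * S i := by
          rw [tsum_eq_sum (s := Finset.range N)
            (fun b hb2 => by rw [hNe b (by simpa using hb2), zero_mul])]
          have hpos : 0 < e j * S j :=
            Nat.mul_pos (Nat.pos_of_ne_zero hc) (S_pos hS0 hmono j)
          exact lt_of_lt_of_le hpos
            (Finset.single_le_sum (f := fun i => e i * S i) (fun i _ => Nat.zero_le _)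
              (Finset.mem_range.2 hj))
        omega
      · exact hc (hNe j hj)
    | Nat.succ k =>
      rw [← hagree k (gr S k) e (hgr k) he, hagree k (gr S k) (gr S (k + 1)) (hgr k) (hgr (k + 1))]
  have halg : ∀ n, α (gr S n) = gr S (n + 1) := fun n =>
    hagree n (gr S n) (gr S (n + 1)) (hgr n) (hgr (n + 1))
  have hDeq : {e : ℕ → ℕ | ∃ n : ℕ, IsGreedyRep S n e} = Set.range (gr S) := by
    ext e
    constructor
    · rintro ⟨n, hn⟩
      exact ⟨n, (huniq n e hn).symm⟩
    · rintro ⟨n, rfl⟩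
      exact ⟨n, hgr n⟩
  have hE : Eset Q = closure (Set.range (gr S)) := by rw [hclos, hDeq]
  have hmemE : ∀ n, gr S n ∈ Eset Q := by
    intro n
    rw [hE]
    exact subset_closure ⟨n, rfl⟩
  -- every point of E satisfies the prefix condition
  have hgoodE : ∀ x ∈ Eset Q, ∀ i, pfx S x i < S i := by
    intro x hx i
    have hx2 : x ∈ closure (Set.range (gr S)) := by rw [← hE]; exact hx
    have hUopen : IsOpen (⋂ j ∈ Finset.range i, {e : ℕ → ℕ | e j = x j}) :=
      cylinder_open x (Finset.range i)
    have hxU : x ∈ ⋂ j ∈ Finset.range i, {e : ℕ → ℕ | e j = x j} :=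
      Set.mem_biInter fun j _ => rfl
    obtain ⟨e, heU, n, rfl⟩ := mem_closure_iff.1 hx2 _ hUopen hxU
    have heq : pfx S x i = pfx S (gr S n) i :=
      pfx_congr fun j hj => (Set.mem_iInter₂.1 heU j (Finset.mem_range.2 hj)).symm
    rw [heq]
    exact hp n i
  -- key approximation lemma
  have happrox : ∀ x ∈ Eset Q, ∀ N, ∃ n, (∀ j, j < N → gr S n j = x j) ∧
      (∀ j, j < N → gr S (n + 1) j = α x j) := by
    intro x hx N
    have hcw : Filter.Tendsto α (nhdsWithin x (Eset Q)) (nhds (α x)) := (hcont x hx).tendsto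
    have hVopen : IsOpen (⋂ j ∈ Finset.range N, {e : ℕ → ℕ | e j = α x j}) :=
      cylinder_open (α x) (Finset.range N)
    have hVmem : (⋂ j ∈ Finset.range N, {e : ℕ → ℕ | e j = α x j}) ∈ nhds (α x) :=
      hVopen.mem_nhds (Set.mem_biInter fun j _ => rfl)
    have hpreV : α ⁻¹' (⋂ j ∈ Finset.range N, {e : ℕ → ℕ | e j = α x j}) ∈
        nhdsWithin x (Eset Q) := hcw hVmem
    obtain ⟨u, huo, hxu, husub⟩ := mem_nhdsWithin.1 hpreV
    have hWopen : IsOpen (u ∩ ⋂ j ∈ Finset.range N, {e : ℕ → ℕ | e j = x j}) :=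
      huo.inter (cylinder_open x (Finset.range N))
    have hxW : x ∈ u ∩ ⋂ j ∈ Finset.range N, {e : ℕ → ℕ | e j = x j} :=
      ⟨hxu, Set.mem_biInter fun j _ => rfl⟩
    obtain ⟨e, heW, n, rfl⟩ := mem_closure_iff.1 (by rw [← hE]; exact hx) _ hWopen hxW
    refine ⟨n, fun j hj => Set.mem_iInter₂.1 heW.2 j (Finset.mem_range.2 hj), fun j hj => ?_⟩
    have hgrn : α (gr S n) ∈ ⋂ j ∈ Finset.range N, {e : ℕ → ℕ | e j = α x j} :=
      husub ⟨heW.1, hmemE n⟩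
    rw [← halg n]
    exact Set.mem_iInter₂.1 hgrn j (Finset.mem_range.2 hj)
  -- crossing
  have hcross : ∀ c : ℕ, ∃ M, ∀ m, M ≤ m → ks (c + 2) ∈ chain Q m := by
    intro c
    have hK1 : 1 ≤ ks (c + 2) := by have := hks.le_apply (x := c + 2); omega
    refine crossing hQlt hQinf (ks (c + 2)) hK1 (fun a ha hQa => ?_)
    rcases hcond (c + 2) a ha with h | h
    · omega
    · exact h.2
  choose M hM using hcross
  set xstar : ℕ → ℕ := fun c => if c + 1 ∈ chain Q (ks (c + 2)) then 1 else 0 with hxstar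
  have hconv : ∀ c, ∀ m, M c ≤ m → gr S (S m - 1) c = xstar c := by
    intro c m hm
    have hKm : ks (c + 2) ∈ chain Q m := hM c m hm
    have hcK : c + 1 ≤ ks (c + 2) := by have := hks.le_apply (x := c + 2); omega
    rw [gr_Sm1 hS0 hmono hQlt hrec m c, hxstar]
    simp only []
    rw [if_congr (chain_trunc hQlt m (ks (c + 2)) (c + 1) hKm hcK) rfl rfl]
  have htend : Tendsto (fun m => gr S (S m - 1)) atTop (nhds xstar) := by
    refine tendsto_pi_nhds.2 fun c => Tendsto.congr' ?_ tendsto_const_nhds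
    filter_upwards [eventually_ge_atTop (M c)] with m hm
    exact (hconv c m hm).symm
  have hxstarE : xstar ∈ Eset Q := by
    rw [hE]
    exact mem_closure_of_tendsto htend (Eventually.of_forall fun m => ⟨S m - 1, rfl⟩)
  have htendS : Tendsto (fun m => gr S (S m)) atTop (nhds (fun _ => 0 : ℕ → ℕ)) := by
    refine tendsto_pi_nhds.2 fun c => Tendsto.congr' ?_ tendsto_const_nhds
    filter_upwards [eventually_gt_atTop c] with m hm
    rw [gr_S_eq hS0 hmono m c, if_neg (by omega)]
  have hαxstar : α xstar = fun _ => 0 := by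
    have h1 : Tendsto (fun m => gr S (S m - 1)) atTop (nhdsWithin xstar (Eset Q)) :=
      tendsto_nhdsWithin_iff.2 ⟨htend, Eventually.of_forall fun m => hmemE (S m - 1)⟩
    have h2 : Tendsto (fun m => α (gr S (S m - 1))) atTop (nhds (α xstar)) :=
      (hcont xstar hxstarE).tendsto.comp h1
    have h3 : (fun m => α (gr S (S m - 1))) = fun m => gr S (S m) := by
      funext m
      have hsm : S m - 1 + 1 = S m := by have := S_pos hS0 hmono m; omega
      rw [halg (S m - 1), hsm]
    rw [h3] at h2
    exact tendsto_nhds_unique h2 htendS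
  -- uniqueness of the preimage of 0
  have hpre : ∀ x, x ∈ Eset Q → α x = (fun _ => 0) → x = xstar := by
    intro x hx hαx
    funext c
    set N := M c + c + 1 with hN
    obtain ⟨n, hn1, hn2⟩ := happrox x hx (N + 1)
    have hzero : ∀ j, j ≤ N → gr S (n + 1) j = 0 := by
      intro j hj
      rw [hn2 j (by omega), hαx]
    have hne : ∃ j, gr S (n + 1) j ≠ 0 := by
      by_contra hc
      push_neg at hc
      have h1 := ht (n + 1)
      have h2 : pfx S (gr S (n + 1)) (n + 1) = 0 := by
        unfold pfx
        exact Finset.sum_eq_zero fun j _ => by rw [hc j, zero_mul]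
      omega
    set m := Nat.find hne with hm
    have hm1 : gr S (n + 1) m ≠ 0 := Nat.find_spec hne
    have hmin : ∀ j, j < m → gr S (n + 1) j = 0 := by
      intro j hj
      by_contra hc
      exact (Nat.find_min hne hj) hc
    have hmN : N < m := by
      by_contra hc
      exact hm1 (hzero m (by omega))
    have hm1' : gr S (n + 1) m = 1 := by have := hb (n + 1) m; omega
    set w : ℕ → ℕ := fun j => if j ≤ m then gr S (S m - 1) j else gr S (n + 1) j with hw
    have hsm1supp : ∀ j, m ≤ j → gr S (S m - 1) j = 0 := by
      intro j hj
      by_contra hc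
      have h1 := hsp (S m - 1) j hc
      have h2 : S m ≤ S j := hmono.le_iff_le.2 hj
      have := S_pos hS0 hmono m
      omega
    have hA : ∀ i, m ≤ i → pfx S (gr S (S m - 1)) i = S m - 1 := fun i hi =>
      gr_total_from hS0 hmono hQlt hrec _ (fun j hj => hsm1supp j (by omega))
    have hgm : pfx S (gr S (n + 1)) m = 0 := by
      unfold pfx
      exact Finset.sum_eq_zero fun j hj => by rw [hmin j (Finset.mem_range.1 hj), zero_mul]
    have hgm1 : pfx S (gr S (n + 1)) (m + 1) = S m := by
      rw [pfx_succ, hgm, hm1']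
      ring
    have hw_le : ∀ i, i ≤ m + 1 → pfx S w i = pfx S (gr S (S m - 1)) i := by
      intro i hi
      refine pfx_congr fun j hj => ?_
      rw [hw]
      simp only []
      rw [if_pos (by omega)]
    have hw_high : ∀ i, m < i → pfx S w i + 1 = pfx S (gr S (n + 1)) i := by
      intro i hi
      have hsplit : ∀ f : ℕ → ℕ, ∑ j ∈ Finset.range i, f j =
          ∑ j ∈ Finset.range (m + 1), f j + ∑ j ∈ Finset.Ico (m + 1) i, f j := by
        intro f
        rw [Finset.range_eq_Ico, Finset.range_eq_Ico]
        exact (Finset.sum_Ico_consecutive f (Nat.zero_le (m + 1)) (by omega)).symm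
      have h1 : pfx S w i = pfx S w (m + 1) + ∑ j ∈ Finset.Ico (m + 1) i, w j * S j :=
        hsplit _
      have h2 : pfx S (gr S (n + 1)) i = pfx S (gr S (n + 1)) (m + 1) +
          ∑ j ∈ Finset.Ico (m + 1) i, gr S (n + 1) j * S j := hsplit _
      have h3 : ∑ j ∈ Finset.Ico (m + 1) i, w j * S j =
          ∑ j ∈ Finset.Ico (m + 1) i, gr S (n + 1) j * S j := by
        refine Finset.sum_congr rfl fun j hj => ?_
        have := (Finset.mem_Ico.1 hj).1
        rw [hw]
        simp only []
        rw [if_neg (by omega)]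
      rw [h1, h3, hw_le (m + 1) (le_refl _), hA (m + 1) (by omega), h2, hgm1]
      have := S_pos hS0 hmono m
      omega
    have hw_bnd : ∀ j, w j ≤ 1 := by
      intro j
      rw [hw]
      simp only []
      split
      · exact hb _ j
      · exact hb _ j
    have hw_supp : ∀ j, n + m + 2 ≤ j → w j = 0 := by
      intro j hj
      rw [hw]
      simp only []
      rw [if_neg (by omega)]
      exact hsupp (n + 1) j (by omega)
    have hw_pfx : ∀ i, pfx S w i < S i := by
      intro i
      rcases le_or_gt i (m + 1) with hi | hi
      · rw [hw_le i hi]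
        exact hp _ i
      · have h1 := hw_high i (by omega)
        have h2 := hp (n + 1) i
        omega
    have hw_sum : pfx S w (n + m + 2) = n := by
      have h1 := hw_high (n + m + 2) (by omega)
      have h2 : pfx S (gr S (n + 1)) (n + m + 2) = n + 1 :=
        gr_total_from hS0 hmono hQlt hrec _ (fun j hj => hsupp (n + 1) j (by omega))
      omega
    have heqw : gr S n = w := by
      refine good_unique (S := S) (N := n + m + 2) (hb n) hw_bnd
        (fun j hj => hsupp n j (by omega)) hw_supp (hp n) hw_pfx ?_
      rw [hw_sum, gr_total_from hS0 hmono hQlt hrec n (fun j hj => hsupp n j (by omega))]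
    have h1 : x c = gr S n c := (hn1 c (by omega)).symm
    have h2 : gr S n c = gr S (S m - 1) c := by
      rw [heqw, hw]
      simp only []
      rw [if_pos (by omega)]
    rw [h1, h2, hconv c m (by omega)]
  -- infinitely many full prefixes ⇒ maps to 0
  have hfullc : ∀ x ∈ Eset Q, (∀ L, ∃ i, L < i ∧ pfx S x i = S i - 1) →
      α x = fun _ => 0 := by
    intro x hx hfull
    funext c
    obtain ⟨i, hci, hfi⟩ := hfull c
    obtain ⟨n, hn1, hn2⟩ := happrox x hx (i + 1)
    have hpfull : pfx S (gr S n) i = S i - 1 := by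
      rw [pfx_congr (e' := x) (fun j hj => hn1 j (by omega))]
      exact hfi
    have hin : i ≤ n + 1 := by
      have h1 := gr_pfx_le hS0 hmono hQlt hrec n i
      have h2 := S_ge hS0 hmono i
      omega
    have hl1 : pfx S (gr S n) (Nat.findGreatest (fun i' => pfx S (gr S n) i' = S i' - 1) (n + 1))
        = S (Nat.findGreatest (fun i' => pfx S (gr S n) i' = S i' - 1) (n + 1)) - 1 :=
      Nat.findGreatest_spec (P := fun i' => pfx S (gr S n) i' = S i' - 1) (m := i) hin hpfull
    have hl3 : i ≤ Nat.findGreatest (fun i' => pfx S (gr S n) i' = S i' - 1) (n + 1) :=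
      Nat.le_findGreatest hin hpfull
    have hl2 : ∀ i', Nat.findGreatest (fun i' => pfx S (gr S n) i' = S i' - 1) (n + 1) < i' →
        pfx S (gr S n) i' ≠ S i' - 1 := by
      intro i' hi'
      rcases le_or_gt i' (n + 1) with h | h
      · exact Nat.findGreatest_is_greatest (P := fun i' => pfx S (gr S n) i' = S i' - 1) hi' h
      · have h1 := gr_pfx_le hS0 hmono hQlt hrec n i'
        have h2 := S_ge hS0 hmono i'
        omega
    have hcar := carry hS0 hmono hQlt hrec n _ hl1 hl2 c
    rw [← hn2 c (by omega), hcar, if_pos (by omega)]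
  -- finitely many full prefixes ⇒ carry formula
  have hformula : ∀ x ∈ Eset Q, α x ≠ (fun _ => 0) → ∃ L,
      (pfx S x L = S L - 1 ∧ (∀ i, L < i → pfx S x i ≠ S i - 1)) ∧
      (∀ j, α x j = if j < L then 0 else if j = L then 1 else x j) := by
    intro x hx hαx
    obtain ⟨L₀, hL₀⟩ : ∃ L₀, ∀ i, L₀ < i → pfx S x i ≠ S i - 1 := by
      by_contra hc
      push_neg at hc
      exact hαx (hfullc x hx hc)
    have hP0 : pfx S x 0 = S 0 - 1 := by
      rw [hS0]
      simp [pfx]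
    have hL1 : pfx S x (Nat.findGreatest (fun i => pfx S x i = S i - 1) L₀)
        = S (Nat.findGreatest (fun i => pfx S x i = S i - 1) L₀) - 1 :=
      Nat.findGreatest_spec (P := fun i => pfx S x i = S i - 1) (m := 0) (Nat.zero_le _) hP0
    set L := Nat.findGreatest (fun i => pfx S x i = S i - 1) L₀ with hLdef
    have hL2 : ∀ i, L < i → pfx S x i ≠ S i - 1 := by
      intro i hi
      rcases le_or_gt i L₀ with h | h
      · exact Nat.findGreatest_is_greatest (P := fun i => pfx S x i = S i - 1) hi h
      · exact hL₀ i h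
    obtain ⟨c₀, hc₀⟩ : ∃ c₀, α x c₀ ≠ 0 := by
      by_contra hc
      push_neg at hc
      exact hαx (funext hc)
    refine ⟨L, ⟨hL1, hL2⟩, fun j => ?_⟩
    set N := j + c₀ + L + 1 with hNd
    obtain ⟨n, hn1, hn2⟩ := happrox x hx (N + 1)
    have hagreepfx : ∀ i', i' ≤ N + 1 → pfx S (gr S n) i' = pfx S x i' := fun i' hi' =>
      pfx_congr fun j' hj' => hn1 j' (by omega)
    have hfLn : pfx S (gr S n) L = S L - 1 := by
      rw [hagreepfx L (by omega)]
      exact hL1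
    have hLn : L ≤ n + 1 := by
      have h1 := gr_pfx_le hS0 hmono hQlt hrec n L
      have h2 := S_ge hS0 hmono L
      omega
    have hl1 : pfx S (gr S n) (Nat.findGreatest (fun i' => pfx S (gr S n) i' = S i' - 1) (n + 1))
        = S (Nat.findGreatest (fun i' => pfx S (gr S n) i' = S i' - 1) (n + 1)) - 1 :=
      Nat.findGreatest_spec (P := fun i' => pfx S (gr S n) i' = S i' - 1) (m := L) hLn hfLn
    set l := Nat.findGreatest (fun i' => pfx S (gr S n) i' = S i' - 1) (n + 1) with hldef
    have hl3 : L ≤ l := Nat.le_findGreatest hLn hfLn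
    have hl2 : ∀ i', l < i' → pfx S (gr S n) i' ≠ S i' - 1 := by
      intro i' hi'
      rcases le_or_gt i' (n + 1) with h | h
      · exact Nat.findGreatest_is_greatest (P := fun i' => pfx S (gr S n) i' = S i' - 1) hi' h
      · have h1 := gr_pfx_le hS0 hmono hQlt hrec n i'
        have h2 := S_ge hS0 hmono i'
        omega
    have hcar := carry hS0 hmono hQlt hrec n l hl1 hl2
    rcases le_or_gt l N with hlN | hlN
    · have hlL : l = L := by
        have h1 : pfx S x l = S l - 1 := by
          rw [← hagreepfx l (by omega)]
          exact hl1
        by_contra hc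
        exact hL2 l (by omega) h1
      rw [← hn2 j (by omega), hcar j, hlL]
      by_cases h1 : j < L
      · rw [if_pos h1, if_pos h1]
      · rw [if_neg h1, if_neg h1]
        by_cases h2 : j = L
        · rw [if_pos h2, if_pos h2]
        · rw [if_neg h2, if_neg h2]
          exact hn1 j (by omega)
    · exfalso
      have h1 : gr S (n + 1) c₀ = 0 := by
        rw [hcar c₀, if_pos (by omega)]
      have h2 : gr S (n + 1) c₀ = α x c₀ := hn2 c₀ (by omega)
      rw [h2] at h1
      exact hc₀ h1
  -- injectivity
  have hinj : ∀ x, x ∈ Eset Q → ∀ y, y ∈ Eset Q → α x = α y → x = y := by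
    intro x hx y hy hxy
    by_cases hz : α x = fun _ => 0
    · rw [hpre x hx hz, hpre y hy (by rw [← hxy]; exact hz)]
    · have hzy : α y ≠ fun _ => 0 := by
        rw [← hxy]
        exact hz
      obtain ⟨Lx, ⟨hfx1, hfx2⟩, hfx3⟩ := hformula x hx hz
      obtain ⟨Ly, ⟨hfy1, hfy2⟩, hfy3⟩ := hformula y hy hzy
      have hLL : Lx = Ly := by
        rcases lt_trichotomy Lx Ly with h | h | h
        · exfalso
          have h1 : α y Lx = 0 := by
            rw [hfy3 Lx, if_pos h]
          have h2 : α x Lx = 1 := by simpa using hfx3 Lx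
          have h3 := congrFun hxy Lx
          rw [h1, h2] at h3
          omega
        · exact h
        · exfalso
          have h1 : α x Ly = 0 := by
            rw [hfx3 Ly, if_pos h]
          have h2 : α y Ly = 1 := by simpa using hfy3 Ly
          have h3 := congrFun hxy Ly
          rw [h1, h2] at h3
          omega
      subst hLL
      funext j
      rcases lt_trichotomy j Lx with h | h | h
      · have e1 : x j = gr S (S Lx - 1) j :=
          fulldet hS0 hmono hQlt hrec hx.1 (hgoodE x hx) hfx1 j h
        have e2 : y j = gr S (S Lx - 1) j :=
          fulldet hS0 hmono hQlt hrec hy.1 (hgoodE y hy) hfy1 j h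
        rw [e1, e2]
      · subst h
        rw [digit0 hS0 hmono hQlt hrec (hx.1 j) (hgoodE x hx) hfx1 (hfx2 (j + 1) (by omega)),
          digit0 hS0 hmono hQlt hrec (hy.1 j) (hgoodE y hy) hfy1 (hfy2 (j + 1) (by omega))]
      · have e1 : α x j = x j := by
          rw [hfx3 j, if_neg (by omega), if_neg (by omega)]
        have e2 : α y j = y j := by
          rw [hfy3 j, if_neg (by omega), if_neg (by omega)]
        have e3 := congrFun hxy j
        rw [e1, e2] at e3
        exact e3
  -- compactness
  have hEcpt : IsCompact (Eset Q) := by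
    refine IsCompact.of_isClosed_subset
      (isCompact_univ_pi fun _ : ℕ => (Set.finite_Iic 1).isCompact)
      (by rw [hclos]; exact isClosed_closure) (fun e he => ?_)
    exact Set.mem_univ_pi.2 fun i => he.1 i
  -- surjectivity
  have hsurj : ∀ z ∈ Eset Q, ∃ x ∈ Eset Q, α x = z := by
    intro z hz
    have hKcl : IsClosed (α '' Eset Q) := (hEcpt.image_of_continuousOn hcont).isClosed
    have hsub : Set.range (gr S) ⊆ α '' Eset Q := by
      rintro e ⟨n, rfl⟩
      match n with
      | Nat.succ k => exact ⟨gr S k, hmemE k, halg k⟩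
      | 0 =>
        have hgr0 : gr S 0 = (fun _ => 0 : ℕ → ℕ) := funext fun j => hsupp 0 j (Nat.zero_le j)
        have hmem : ∀ m : ℕ, gr S (S m) ∈ α '' Eset Q := by
          intro m
          have hsm : S m - 1 + 1 = S m := by have := S_pos hS0 hmono m; omega
          exact ⟨gr S (S m - 1), hmemE _, by rw [halg (S m - 1), hsm]⟩
        rw [hgr0]
        exact hKcl.mem_of_tendsto htendS (Eventually.of_forall hmem)
    have hEK : Eset Q ⊆ α '' Eset Q := by
      have h1 : closure (Set.range (gr S)) ⊆ α '' Eset Q := closure_minimal hsub hKcl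
      intro z' hz'
      rw [hE] at hz'
      exact h1 hz'
    obtain ⟨x, hx, hxz⟩ := hEK hz
    exact ⟨x, hx, hxz⟩
  -- assemble
  haveI : CompactSpace ↥(Eset Q) := isCompact_iff_compactSpace.mp hEcpt
  set F : ↥(Eset Q) → ↥(Eset Q) := fun x => ⟨α x, hmaps x.2⟩ with hF
  have hFc : Continuous F := (hcont.restrict).subtype_mk _
  have hFbij : Function.Bijective F := by
    constructor
    · intro a b hab
      exact Subtype.ext (hinj a a.2 b b.2 (congrArg Subtype.val hab))
    · intro z
      obtain ⟨x, hx, hxz⟩ := hsurj z z.2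
      exact ⟨⟨x, hx⟩, Subtype.ext hxz⟩
  refine ⟨⟨Continuous.homeoOfEquivCompactToT2 (f := Equiv.ofBijective F hFbij) hFc,
    fun e => rfl⟩, ⟨xstar, ⟨hxstarE, hαxstar⟩, fun y hy => hpre y hy.1 hy.2⟩⟩
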